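/- Let P ⊆ Q be finitely generated, cancellative, torsion-free, saturated commutative monoids (fs monoids) such that the inclusion is exact, i.e. P = Q ∩ P^gp inside the Grothendieck group Q^gp. For an element q̃ of the quotient group Q^gp/P^gp, let Q_{q̃} be the set of elements of Q mapping to q̃. Then Q_{q̃} is a finitely generated P-set: there exist q₁, …, qₙ ∈ Q_{q̃} with Q_{q̃} = ⋃ᵢ (qᵢ + P). -/

import Mathlib

/-- Gordan-type finiteness: for an exact inclusion `P ⊆ Q` of fs monoids (realized as
finitely generated, saturated submonoids of a torsion-free abelian group `G`, the
ambient group playing the role of `Q^gp`), every nonempty fiber of `Q → Q^gp/P^gp`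
is a finitely generated `P`-set. -/
theorem stmt8 (G : Type*) [AddCommGroup G] [NoZeroSMulDivisors ℤ G]
    (P Q : AddSubmonoid G) (hPQ : P ≤ Q)
    (hPfg : P.FG) (hQfg : Q.FG)
    (hPsat : ∀ (x : G) (n : ℕ), 0 < n →
      x ∈ AddSubgroup.closure (P : Set G) → n • x ∈ P → x ∈ P)
    (hQsat : ∀ (x : G) (n : ℕ), 0 < n →
      x ∈ AddSubgroup.closure (Q : Set G) → n • x ∈ Q → x ∈ Q)
    (hexact : ∀ x ∈ Q, x ∈ AddSubgroup.closure (P : Set G) → x ∈ P)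
    (q₀ : G) (hq₀ : q₀ ∈ Q) :
    ∃ s : Finset G,
      (∀ q ∈ s, q ∈ Q ∧ q - q₀ ∈ AddSubgroup.closure (P : Set G)) ∧
      ∀ x : G, (x ∈ Q ∧ x - q₀ ∈ AddSubgroup.closure (P : Set G)) ↔
        ∃ q ∈ s, ∃ p ∈ P, x = q + p := by
  classical
  set H := AddSubgroup.closure (P : Set G) with hH
  -- The fiber, as a subset of the monoid `↥Q`.
  set F : Set ↥Q := {x | (x : G) - q₀ ∈ H} with hF
  -- The monoid algebra `ℤ[Q]` is Noetherian since `Q` is finitely generated.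
  haveI : AddMonoid.FG ↥Q := (AddMonoid.fg_iff_addSubmonoid_fg Q).mpr hQfg
  haveI : IsNoetherianRing (AddMonoidAlgebra ℤ ↥Q) :=
    Algebra.FiniteType.isNoetherianRing ℤ _
  -- The ideal generated by the monomials indexed by the fiber.
  set I : Ideal (AddMonoidAlgebra ℤ ↥Q) :=
    Ideal.span (AddMonoidAlgebra.of' ℤ ↥Q '' F) with hI
  -- `I` is finitely generated, hence generated by finitely many of the monomials.
  obtain ⟨gen, hgen⟩ := (IsNoetherian.noetherian I : I.FG)
  have hTsub : ∀ g ∈ gen, ∃ T : Finset (AddMonoidAlgebra ℤ ↥Q),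
      ↑T ⊆ AddMonoidAlgebra.of' ℤ ↥Q '' F ∧ g ∈ Ideal.span (T : Set _) := by
    intro g hg
    have : g ∈ I := hgen ▸ Ideal.subset_span hg
    exact Submodule.mem_span_finite_of_mem_span this
  choose Tf hTf1 hTf2 using hTsub
  set T : Finset (AddMonoidAlgebra ℤ ↥Q) := gen.attach.biUnion
    (fun g => Tf g.1 g.2) with hT
  have hTsubF : ↑T ⊆ AddMonoidAlgebra.of' ℤ ↥Q '' F := by
    intro t ht
    rw [hT, Finset.coe_biUnion] at ht
    obtain ⟨g, -, hg⟩ := Set.mem_iUnion₂.mp ht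
    exact hTf1 g.1 g.2 hg
  have hspanT : Ideal.span (T : Set _) = I := by
    apply le_antisymm
    · exact Ideal.span_le.mpr (hTsubF.trans Ideal.subset_span)
    · rw [← hgen]
      apply Ideal.span_le.mpr
      intro g hg
      refine Ideal.span_mono ?_ (hTf2 g hg)
      intro t ht
      rw [hT, Finset.coe_biUnion]
      exact Set.mem_iUnion₂.mpr ⟨⟨g, hg⟩, Finset.mem_attach _ _, ht⟩
  -- Extract the finite subset `F₀ ⊆ F` of monomial exponents.
  obtain ⟨F₀, hF₀F, hF₀T⟩ := Finset.subset_set_image_iff.mp hTsubF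
  refine ⟨F₀.image (fun x : ↥Q => (x : G)), ?_, ?_⟩
  · intro q hq
    obtain ⟨m, hm, rfl⟩ := Finset.mem_image.mp hq
    exact ⟨m.2, hF₀F hm⟩
  · intro x
    constructor
    · rintro ⟨hxQ, hxH⟩
      have hxF : (⟨x, hxQ⟩ : ↥Q) ∈ F := hxH
      have hxI : AddMonoidAlgebra.of' ℤ ↥Q (⟨x, hxQ⟩ : ↥Q) ∈ I :=
        Ideal.subset_span ⟨_, hxF, rfl⟩
      rw [← hspanT, ← hF₀T, Finset.coe_image] at hxI
      have := AddMonoidAlgebra.mem_ideal_span_of'_image.mp hxI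
      have hsupp : (⟨x, hxQ⟩ : ↥Q) ∈
          (AddMonoidAlgebra.of' ℤ ↥Q (⟨x, hxQ⟩ : ↥Q)).coeff.support := by
        rw [AddMonoidAlgebra.of'_apply, AddMonoidAlgebra.coeff_single, Finsupp.support_single_ne_zero _ one_ne_zero]
        exact Finset.mem_singleton_self _
      obtain ⟨m₀, hm₀', d, hd⟩ := this _ hsupp
      have hm₀ : m₀ ∈ F₀ := hm₀'
      have hx_eq : x = (d : G) + (m₀ : G) := congrArg Subtype.val hd
      have hdH : (d : G) ∈ H := by
        have h1 : (x : G) - q₀ ∈ H := hxH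
        have h2 : (m₀ : G) - q₀ ∈ H := hF₀F hm₀'
        have : (x - q₀) - ((m₀ : G) - q₀) ∈ H := H.sub_mem h1 h2
        convert this using 1
        rw [hx_eq]; abel
      have hdP : (d : G) ∈ P := hexact _ d.2 hdH
      exact ⟨(m₀ : G), Finset.mem_image.mpr ⟨m₀, hm₀, rfl⟩, (d : G), hdP,
        by rw [hx_eq]; abel⟩
    · rintro ⟨q, hq, p, hp, rfl⟩
      obtain ⟨m, hm, rfl⟩ := Finset.mem_image.mp hq
      have hmF : (m : G) - q₀ ∈ H := hF₀F hm
      refine ⟨Q.add_mem m.2 (hPQ hp), ?_⟩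
      have : ((m : G) - q₀) + p ∈ H := H.add_mem hmF (AddSubgroup.subset_closure hp)
      convert this using 1
      abel
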